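/- Let c: X×U → ℝ be nonnegative, measurable and bounded, Q a fixed channel, and for a prior P̃ let γ̃* be an optimal (or ε-optimal) policy for prior P̃. Then applying γ̃* to the true prior P incurs a mismatch loss bounded by |J(P,Q,γ̃*) − J*(P,Q)| ≤ 2‖c‖_∞ ‖P − P̃‖_TV (up to 2ε for ε-optimal policies). -/

import Mathlib

open MeasureTheory ProbabilityTheory Filter

/-- Total variation distance (factor-2 convention). -/
noncomputable def tvDist {α : Type*} [MeasurableSpace α] (μ ν : Measure α) : ℝ :=
  2 * ⨆ B : {B : Set α // MeasurableSet B}, |(μ B.1).toReal - (ν B.1).toReal|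

/-- The expected cost of a policy. -/
noncomputable def Jcost {X Y U : Type*} [MeasurableSpace X] [MeasurableSpace Y]
    [MeasurableSpace U] (c : X → U → ℝ) (Q : Kernel X Y) (P : Measure X) (γ : Y → U) : ℝ :=
  ∫ p, c p.1 (γ p.2) ∂(P ⊗ₘ Q)

/-- The single-stage optimal cost. -/
noncomputable def Jstar {X Y U : Type*} [MeasurableSpace X] [MeasurableSpace Y]
    [MeasurableSpace U] (c : X → U → ℝ) (Q : Kernel X Y) (P : Measure X) : ℝ :=
  ⨅ γ : {γ : Y → U // Measurable γ}, Jcost c Q P γ.1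

section Aux

variable {α : Type*} [MeasurableSpace α]

lemma tvDist_bddAbove (μ ν : Measure α) [IsProbabilityMeasure μ] [IsProbabilityMeasure ν] :
    BddAbove (Set.range fun B : {B : Set α // MeasurableSet B} =>
      |(μ B.1).toReal - (ν B.1).toReal|) := by
  refine ⟨2, ?_⟩
  rintro x ⟨B, rfl⟩
  have h1 : (μ B.1).toReal ≤ 1 := by
    simpa using ENNReal.toReal_mono ENNReal.one_ne_top (prob_le_one (μ := μ) (s := B.1))
  have h2 : (ν B.1).toReal ≤ 1 := by
    simpa using ENNReal.toReal_mono ENNReal.one_ne_top (prob_le_one (μ := ν) (s := B.1))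
  have h3 : (0:ℝ) ≤ (μ B.1).toReal := ENNReal.toReal_nonneg
  have h4 : (0:ℝ) ≤ (ν B.1).toReal := ENNReal.toReal_nonneg
  rw [abs_sub_le_iff]; constructor <;> linarith

lemma abs_measure_sub_le_tvDist (μ ν : Measure α) [IsProbabilityMeasure μ]
    [IsProbabilityMeasure ν] {B : Set α} (hB : MeasurableSet B) :
    |(μ B).toReal - (ν B).toReal| ≤ tvDist μ ν := by
  have h := le_ciSup (tvDist_bddAbove μ ν) (⟨B, hB⟩ : {B : Set α // MeasurableSet B})
  have h0 : (0:ℝ) ≤ ⨆ B : {B : Set α // MeasurableSet B}, |(μ B.1).toReal - (ν B.1).toReal| :=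
    le_trans (abs_nonneg _) h
  calc |(μ B).toReal - (ν B).toReal| ≤ _ := h
    _ ≤ tvDist μ ν := by rw [tvDist]; linarith

lemma tvDist_nonneg (μ ν : Measure α) [IsProbabilityMeasure μ] [IsProbabilityMeasure ν] :
    0 ≤ tvDist μ ν :=
  le_trans (abs_nonneg _) (abs_measure_sub_le_tvDist μ ν MeasurableSet.empty)

/-- Key analytic lemma: the difference of integrals of a `[0, M]`-valued function against two
probability measures is bounded by `M` times the total variation distance. -/
lemma abs_integral_sub_integral_le (μ ν : Measure α) [IsProbabilityMeasure μ]
    [IsProbabilityMeasure ν] {f : α → ℝ} (hf : Measurable f) {M : ℝ}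
    (h0 : ∀ x, 0 ≤ f x) (hM : ∀ x, f x ≤ M) :
    |∫ x, f x ∂μ - ∫ x, f x ∂ν| ≤ M * tvDist μ ν := by
  obtain ⟨s, hs, hsle, hscle⟩ := hahn_decomposition (μ := μ) (ν := ν)
  -- restricted measures comparisons
  have hres : ν.restrict s ≤ μ.restrict s := by
    refine Measure.le_iff.2 fun t ht => ?_
    rw [Measure.restrict_apply ht, Measure.restrict_apply ht]
    exact hsle _ (ht.inter hs) (Set.inter_subset_right)
  have hresc : μ.restrict sᶜ ≤ ν.restrict sᶜ := by
    refine Measure.le_iff.2 fun t ht => ?_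
    rw [Measure.restrict_apply ht, Measure.restrict_apply ht]
    exact hscle _ (ht.inter hs.compl) (Set.inter_subset_right)
  have hfnn : ∀ x, ‖f x‖ ≤ M := fun x => by
    rw [Real.norm_eq_abs, abs_of_nonneg (h0 x)]; exact hM x
  have hint : ∀ (ρ : Measure α) [IsFiniteMeasure ρ], Integrable f ρ := fun ρ _ =>
    Integrable.mono' (integrable_const M) hf.aestronglyMeasurable (ae_of_all _ hfnn)
  have hMf : ∀ (ρ : Measure α) [IsFiniteMeasure ρ], Integrable (fun x => M - f x) ρ :=
    fun ρ _ => (integrable_const M).sub (hint ρ)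
  have hMfnn : ∀ x, 0 ≤ M - f x := fun x => sub_nonneg.2 (hM x)
  -- bounds on the positive part (on s)
  have hA1 : ∫ x, f x ∂(ν.restrict s) ≤ ∫ x, f x ∂(μ.restrict s) :=
    integral_mono_measure hres (ae_of_all _ h0) (hint _)
  have hA2 : ∫ x, f x ∂(μ.restrict s) - ∫ x, f x ∂(ν.restrict s)
      ≤ M * ((μ s).toReal - (ν s).toReal) := by
    have h := integral_mono_measure hres (ae_of_all _ hMfnn) (hMf (μ.restrict s))
    rw [integral_sub (integrable_const M) (hint _),
        integral_sub (integrable_const M) (hint _)] at h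
    simp only [integral_const, Measure.restrict_apply_univ, measureReal_restrict_apply_univ, measureReal_def, smul_eq_mul] at h
    linarith
  -- bounds on the negative part (on sᶜ)
  have hB1 : ∫ x, f x ∂(μ.restrict sᶜ) ≤ ∫ x, f x ∂(ν.restrict sᶜ) :=
    integral_mono_measure hresc (ae_of_all _ h0) (hint _)
  have hB2 : ∫ x, f x ∂(ν.restrict sᶜ) - ∫ x, f x ∂(μ.restrict sᶜ)
      ≤ M * ((ν sᶜ).toReal - (μ sᶜ).toReal) := by
    have h := integral_mono_measure hresc (ae_of_all _ hMfnn) (hMf (ν.restrict sᶜ))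
    rw [integral_sub (integrable_const M) (hint _),
        integral_sub (integrable_const M) (hint _)] at h
    simp only [integral_const, Measure.restrict_apply_univ, measureReal_restrict_apply_univ, measureReal_def, smul_eq_mul] at h
    linarith
  -- decompose the integrals
  have hdecμ : ∫ x, f x ∂μ = ∫ x, f x ∂(μ.restrict s) + ∫ x, f x ∂(μ.restrict sᶜ) :=
    (integral_add_compl hs (hint μ)).symm
  have hdecν : ∫ x, f x ∂ν = ∫ x, f x ∂(ν.restrict s) + ∫ x, f x ∂(ν.restrict sᶜ) :=
    (integral_add_compl hs (hint ν)).symm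
  -- M ≥ 0 (α is nonempty since it carries a probability measure)
  have hα : Nonempty α := by
    by_contra h
    have : μ Set.univ = 1 := measure_univ
    rw [Set.univ_eq_empty_iff.2 (not_nonempty_iff.1 h), measure_empty] at this
    exact zero_ne_one this
  have hM0 : 0 ≤ M := le_trans (h0 hα.some) (hM hα.some)
  have htvs : |(μ s).toReal - (ν s).toReal| ≤ tvDist μ ν := abs_measure_sub_le_tvDist μ ν hs
  have htvsc : |(ν sᶜ).toReal - (μ sᶜ).toReal| ≤ tvDist μ ν := by
    rw [abs_sub_comm]; exact abs_measure_sub_le_tvDist μ ν hs.compl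
  have h1 : (μ s).toReal - (ν s).toReal ≤ tvDist μ ν := le_trans (le_abs_self _) htvs
  have h2 : (ν sᶜ).toReal - (μ sᶜ).toReal ≤ tvDist μ ν := le_trans (le_abs_self _) htvsc
  rw [abs_sub_le_iff]
  constructor
  · calc ∫ x, f x ∂μ - ∫ x, f x ∂ν
        ≤ M * ((μ s).toReal - (ν s).toReal) := by rw [hdecμ, hdecν]; linarith
      _ ≤ M * tvDist μ ν := by
          exact mul_le_mul_of_nonneg_left h1 hM0
  · calc ∫ x, f x ∂ν - ∫ x, f x ∂μ
        ≤ M * ((ν sᶜ).toReal - (μ sᶜ).toReal) := by rw [hdecμ, hdecν]; linarith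
      _ ≤ M * tvDist μ ν := mul_le_mul_of_nonneg_left h2 hM0

end Aux

/-- Mismatch bound: if `γ̃` is an ε-optimal policy designed for the (incorrect) prior `P̃`,
then applying it to the true prior `P` incurs a loss of at most
`2‖c‖_∞ ‖P − P̃‖_TV + 2ε`. -/
theorem robustness_mismatch_bound
    {X Y U : Type*} [MeasurableSpace X] [MeasurableSpace Y] [MeasurableSpace U] [Nonempty U]
    (c : X → U → ℝ) (hc : Measurable (Function.uncurry c))
    (hc0 : ∀ x u, 0 ≤ c x u) (M : ℝ) (hcM : ∀ x u, |c x u| ≤ M)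
    (Q : Kernel X Y) [IsMarkovKernel Q]
    (P Pt : Measure X) [IsProbabilityMeasure P] [IsProbabilityMeasure Pt]
    (ε : ℝ) (hε : 0 ≤ ε)
    (γt : Y → U) (hγt : Measurable γt)
    (hopt : Jcost c Q Pt γt ≤ Jstar c Q Pt + ε) :
    |Jcost c Q P γt - Jstar c Q P| ≤ 2 * M * tvDist P Pt + 2 * ε := by
  -- basic facts
  have hX : Nonempty X := by
    by_contra h
    have : P Set.univ = 1 := measure_univ
    rw [Set.univ_eq_empty_iff.2 (not_nonempty_iff.1 h), measure_empty] at this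
    exact zero_ne_one this
  have hM0 : 0 ≤ M := le_trans (abs_nonneg _) (hcM hX.some (Classical.arbitrary U))
  -- measurability and integrability facts for an arbitrary measurable policy
  have hmeas : ∀ (γ : Y → U), Measurable γ →
      Measurable (fun p : X × Y => c p.1 (γ p.2)) := fun γ hγ =>
    hc.comp (measurable_fst.prodMk (hγ.comp measurable_snd))
  have hintc : ∀ (γ : Y → U), Measurable γ → ∀ (ρ : Measure (X × Y)) [IsFiniteMeasure ρ],
      Integrable (fun p : X × Y => c p.1 (γ p.2)) ρ := by
    intro γ hγ ρ _
    refine Integrable.mono' (integrable_const M) (hmeas γ hγ).aestronglyMeasurable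
      (ae_of_all _ fun p => ?_)
    rw [Real.norm_eq_abs]; exact hcM _ _
  -- nonnegativity of Jcost and boundedness below of the infimum
  have hJnn : ∀ (ρ : Measure X) [IsProbabilityMeasure ρ] (γ : Y → U),
      0 ≤ Jcost c Q ρ γ := fun ρ _ γ =>
    integral_nonneg fun p => hc0 _ _
  have hbdd : ∀ (ρ : Measure X) [IsProbabilityMeasure ρ],
      BddBelow (Set.range fun γ : {γ : Y → U // Measurable γ} => Jcost c Q ρ γ.1) := by
    intro ρ _
    exact ⟨0, by rintro x ⟨γ, rfl⟩; exact hJnn ρ γ.1⟩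
  have hne : Nonempty {γ : Y → U // Measurable γ} :=
    ⟨⟨fun _ => Classical.arbitrary U, measurable_const⟩⟩
  -- key comparison for an arbitrary measurable policy
  have hkey : ∀ (γ : Y → U), Measurable γ →
      |Jcost c Q P γ - Jcost c Q Pt γ| ≤ M * tvDist P Pt := by
    intro γ hγ
    have hintf : ∀ x, Integrable (fun y => c x (γ y)) (Q x) := by
      intro x
      refine Integrable.mono' (integrable_const M)
        ((hc.comp (measurable_const.prodMk (hγ.comp measurable_id))).aestronglyMeasurable)
        (ae_of_all _ fun y => ?_)
      rw [Real.norm_eq_abs]; exact hcM _ _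
    set f : X → ℝ := fun x => ∫ y, c x (γ y) ∂(Q x) with hf_def
    have hfm : Measurable f := by
      have : StronglyMeasurable (Function.uncurry fun x y => c x (γ y)) :=
        (hc.comp (measurable_fst.prodMk (hγ.comp measurable_snd))).stronglyMeasurable
      exact this.integral_kernel_prod_right.measurable
    have hrw : ∀ (ρ : Measure X) [IsProbabilityMeasure ρ],
        Jcost c Q ρ γ = ∫ x, f x ∂ρ := by
      intro ρ _
      rw [Jcost, Measure.integral_compProd (hintc γ hγ _)]
    have hf0 : ∀ x, 0 ≤ f x := fun x => integral_nonneg fun y => hc0 _ _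
    have hfM : ∀ x, f x ≤ M := by
      intro x
      calc f x ≤ ∫ _, M ∂(Q x) :=
            integral_mono (hintf x) (integrable_const M) fun y => le_of_abs_le (hcM _ _)
        _ = M := by simp
    rw [hrw P, hrw Pt]
    exact abs_integral_sub_integral_le P Pt hfm hf0 hfM
  set D := M * tvDist P Pt with hD
  have hD0 : 0 ≤ D := mul_nonneg hM0 (tvDist_nonneg P Pt)
  -- Jstar P ≤ Jcost P γt
  have h1 : Jstar c Q P ≤ Jcost c Q P γt := ciInf_le (hbdd P) ⟨γt, hγt⟩
  -- Jstar Pt ≤ Jstar P + D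
  have h2 : Jstar c Q Pt ≤ Jstar c Q P + D := by
    rw [← sub_le_iff_le_add]
    refine le_ciInf fun γ => ?_
    have := hkey γ.1 γ.2
    have h3 : Jcost c Q Pt γ.1 - Jcost c Q P γ.1 ≤ D := by
      have := abs_sub_le_iff.1 this
      linarith [this.2]
    have h4 : Jstar c Q Pt ≤ Jcost c Q Pt γ.1 := ciInf_le (hbdd Pt) γ
    linarith
  have h5 : Jcost c Q P γt - Jcost c Q Pt γt ≤ D :=
    le_trans (le_abs_self _) (hkey γt hγt)
  have h6 : 0 ≤ Jcost c Q P γt - Jstar c Q P := sub_nonneg.2 h1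
  rw [abs_of_nonneg h6]
  have : Jcost c Q P γt ≤ Jstar c Q P + 2 * D + ε := by linarith
  linarith
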